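/- Define X = {p ∈ ℝ^T : P̲ ⪯ p ⪯ P̄, S̲ ⪯ Hp ⪯ S̄} with H the cumulative-sum matrix, and suppose P̲ ⪯ P̄ and H P̲ ⪯ S̲ ⪯ S̄ ⪯ H P̄ componentwise. Define B̲, B̄ as B̲_t = (H P̄)_t + max_{τ≥t}(S̲_τ − (H P̄)_τ) and B̄_t = (H P̲)_t + min_{τ≥t}(S̄_τ − (H P̲)_τ). If B̲ ⪯ B̄, then X is nonempty; in particular, the greedy forward construction S_0 = 0, β̲_t = max(B̲_t, S_{t−1} + P̲_t), β̄_t = min(B̄_t, S_{t−1} + P̄_t), S_t = clip(S_{t−1} + p̂_t, β̲_t, β̄_t), p_t = S_t − S_{t−1} produces a point p ∈ X for any target p̂ ∈ ℝ^T. -/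
import Mathlib


/-- Cumulative sum: `(Hp)_t = ∑_{τ ≤ t} p_τ`. -/
def cumsum {T : ℕ} (p : Fin T → ℝ) (t : Fin T) : ℝ := ∑ τ ∈ Finset.Iic t, p τ

/-- Lower envelope `B̲_t = C̄_t + max_{τ≥t}(S̲_τ − C̄_τ)` with `C̄ = H P̄`. -/
def Blo {T : ℕ} (Phi Slo : Fin T → ℝ) (t : Fin T) : ℝ :=
  cumsum Phi t + (Finset.Ici t).sup' Finset.nonempty_Ici (fun τ => Slo τ - cumsum Phi τ)

/-- Upper envelope `B̄_t = C̲_t + min_{τ≥t}(S̄_τ − C̲_τ)` with `C̲ = H P̲`. -/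
def Bhi {T : ℕ} (Plo Shi : Fin T → ℝ) (t : Fin T) : ℝ :=
  cumsum Plo t + (Finset.Ici t).inf' Finset.nonempty_Ici (fun τ => Shi τ - cumsum Plo τ)

/-- Greedy forward construction: `S_0 = 0`,
`S_t = clip(S_{t−1} + p̂_t, max(B̲_t, S_{t−1}+P̲_t), min(B̄_t, S_{t−1}+P̄_t))`. -/
def greedyS {T : ℕ} (Plo Phi Slo Shi phat : Fin T → ℝ) : ℕ → ℝ
  | 0 => 0
  | n + 1 =>
    if h : n < T then
      let t : Fin T := ⟨n, h⟩
      let S := greedyS Plo Phi Slo Shi phat n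
      min (max (S + phat t) (max (Blo Phi Slo t) (S + Plo t)))
          (min (Bhi Plo Shi t) (S + Phi t))
    else greedyS Plo Phi Slo Shi phat n

/-- If `P̲ ⪯ P̄`, `H P̲ ⪯ S̲ ⪯ S̄ ⪯ H P̄`, and `B̲ ⪯ B̄`, then the
feasibility polytope `X` is nonempty; in particular, for any target `p̂`, the greedy
construction `p_t = S_t − S_{t−1}` produces a point `p ∈ X`. -/
lemma Iic_succ' {T : ℕ} (n : ℕ) (h : n + 1 < T) :
    Finset.Iic (⟨n+1, h⟩ : Fin T) = insert ⟨n+1, h⟩ (Finset.Iic ⟨n, by omega⟩) := by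
  ext τ
  simp only [Finset.mem_Iic, Finset.mem_insert, Fin.le_def, Fin.ext_iff]
  omega

lemma cumsum_succ' {T : ℕ} (p : Fin T → ℝ) (n : ℕ) (h : n + 1 < T) :
    cumsum p ⟨n+1, h⟩ = cumsum p ⟨n, by omega⟩ + p ⟨n+1, h⟩ := by
  unfold cumsum
  rw [Iic_succ' n h, Finset.sum_insert (by simp [Finset.mem_Iic, Fin.le_def])]
  ring

lemma cumsum_zero' {T : ℕ} (p : Fin T → ℝ) (h : 0 < T) :
    cumsum p ⟨0, h⟩ = p ⟨0, h⟩ := by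
  unfold cumsum
  have : Finset.Iic (⟨0, h⟩ : Fin T) = {⟨0, h⟩} := by
    ext τ
    simp only [Finset.mem_Iic, Finset.mem_singleton, Fin.le_def, Fin.ext_iff]
    omega
  rw [this, Finset.sum_singleton]

lemma Slo_le_Blo {T : ℕ} (Phi Slo : Fin T → ℝ) (t : Fin T) : Slo t ≤ Blo Phi Slo t := by
  have := Finset.le_sup' (f := fun τ => Slo τ - cumsum Phi τ)
    (b := t) (Finset.mem_Ici.mpr le_rfl)
  unfold Blo; linarith

lemma Bhi_le_Shi {T : ℕ} (Plo Shi : Fin T → ℝ) (t : Fin T) : Bhi Plo Shi t ≤ Shi t := by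
  have := Finset.inf'_le (f := fun τ => Shi τ - cumsum Plo τ)
    (b := t) (Finset.mem_Ici.mpr le_rfl)
  unfold Bhi; linarith

lemma Blo_succ_le {T : ℕ} (Phi Slo : Fin T → ℝ) (n : ℕ) (h : n + 1 < T) :
    Blo Phi Slo ⟨n+1, h⟩ ≤ Blo Phi Slo ⟨n, by omega⟩ + Phi ⟨n+1, h⟩ := by
  have hsub : Finset.Ici (⟨n+1, h⟩ : Fin T) ⊆ Finset.Ici ⟨n, by omega⟩ :=
    Finset.Ici_subset_Ici.mpr (by simp [Fin.le_def])
  have := Finset.sup'_mono (fun τ => Slo τ - cumsum Phi τ) hsub Finset.nonempty_Ici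
  have hc := cumsum_succ' Phi n h
  unfold Blo
  linarith

lemma le_Bhi_succ {T : ℕ} (Plo Shi : Fin T → ℝ) (n : ℕ) (h : n + 1 < T) :
    Bhi Plo Shi ⟨n, by omega⟩ + Plo ⟨n+1, h⟩ ≤ Bhi Plo Shi ⟨n+1, h⟩ := by
  have hsub : Finset.Ici (⟨n+1, h⟩ : Fin T) ⊆ Finset.Ici ⟨n, by omega⟩ :=
    Finset.Ici_subset_Ici.mpr (by simp [Fin.le_def])
  have := Finset.inf'_mono (fun τ => Shi τ - cumsum Plo τ) hsub Finset.nonempty_Ici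
  have hc := cumsum_succ' Plo n h
  unfold Bhi
  linarith

lemma Blo_zero_le {T : ℕ} (Phi Slo : Fin T → ℝ) (h : 0 < T)
    (hSC : ∀ τ, Slo τ ≤ cumsum Phi τ) :
    Blo Phi Slo ⟨0, h⟩ ≤ Phi ⟨0, h⟩ := by
  have hsup : (Finset.Ici (⟨0,h⟩ : Fin T)).sup' Finset.nonempty_Ici
      (fun τ => Slo τ - cumsum Phi τ) ≤ 0 :=
    Finset.sup'_le _ _ (fun τ _ => by linarith [hSC τ])
  have := cumsum_zero' Phi h
  unfold Blo
  linarith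

lemma le_Bhi_zero {T : ℕ} (Plo Shi : Fin T → ℝ) (h : 0 < T)
    (hSC : ∀ τ, cumsum Plo τ ≤ Shi τ) :
    Plo ⟨0, h⟩ ≤ Bhi Plo Shi ⟨0, h⟩ := by
  have hinf : (0:ℝ) ≤ (Finset.Ici (⟨0,h⟩ : Fin T)).inf' Finset.nonempty_Ici
      (fun τ => Shi τ - cumsum Plo τ) :=
    Finset.le_inf' _ _ (fun τ _ => by linarith [hSC τ])
  have := cumsum_zero' Plo h
  unfold Bhi
  linarith

lemma clip_bounds (x lo1 lo2 hi1 hi2 : ℝ) (h11 : lo1 ≤ hi1) (h12 : lo1 ≤ hi2)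
    (h21 : lo2 ≤ hi1) (h22 : lo2 ≤ hi2) :
    lo1 ≤ min (max x (max lo1 lo2)) (min hi1 hi2) ∧
    lo2 ≤ min (max x (max lo1 lo2)) (min hi1 hi2) ∧
    min (max x (max lo1 lo2)) (min hi1 hi2) ≤ hi1 ∧
    min (max x (max lo1 lo2)) (min hi1 hi2) ≤ hi2 := by
  refine ⟨le_min (le_max_of_le_right (le_max_left _ _)) (le_min h11 h12),
    le_min (le_max_of_le_right (le_max_right _ _)) (le_min h21 h22),
    (min_le_right _ _).trans (min_le_left _ _),
    (min_le_right _ _).trans (min_le_right _ _)⟩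

lemma greedy_invariant {T : ℕ} (Plo Phi Slo Shi phat : Fin T → ℝ)
    (hP : ∀ t, Plo t ≤ Phi t)
    (hC : ∀ t, cumsum Plo t ≤ Slo t ∧ Slo t ≤ Shi t ∧ Shi t ≤ cumsum Phi t)
    (hB : ∀ t, Blo Phi Slo t ≤ Bhi Plo Shi t) :
    ∀ n (h : n < T),
      Blo Phi Slo ⟨n, h⟩ ≤ greedyS Plo Phi Slo Shi phat (n+1) ∧
      greedyS Plo Phi Slo Shi phat (n+1) ≤ Bhi Plo Shi ⟨n, h⟩ ∧
      Plo ⟨n, h⟩ ≤ greedyS Plo Phi Slo Shi phat (n+1) - greedyS Plo Phi Slo Shi phat n ∧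
      greedyS Plo Phi Slo Shi phat (n+1) - greedyS Plo Phi Slo Shi phat n ≤ Phi ⟨n, h⟩ := by
  intro n
  induction n with
  | zero =>
    intro h
    have h1 : Blo Phi Slo ⟨0, h⟩ ≤ Phi ⟨0, h⟩ :=
      Blo_zero_le Phi Slo h (fun τ => (hC τ).2.1.trans (hC τ).2.2)
    have h2 : Plo ⟨0, h⟩ ≤ Bhi Plo Shi ⟨0, h⟩ :=
      le_Bhi_zero Plo Shi h (fun τ => (hC τ).1.trans (hC τ).2.1)
    have key := clip_bounds (0 + phat ⟨0, h⟩) (Blo Phi Slo ⟨0, h⟩) (0 + Plo ⟨0, h⟩)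
      (Bhi Plo Shi ⟨0, h⟩) (0 + Phi ⟨0, h⟩) (hB _) (by linarith) (by linarith)
      (by linarith [hP (⟨0, h⟩ : Fin T)])
    simp only [greedyS, dif_pos h]
    refine ⟨key.1, key.2.2.1, by linarith [key.2.1], by linarith [key.2.2.2]⟩
  | succ n ih =>
    intro h
    have hn : n < T := by omega
    obtain ⟨ih1, ih2, -, -⟩ := ih hn
    set S := greedyS Plo Phi Slo Shi phat (n+1) with hS
    have h1 : Blo Phi Slo ⟨n+1, h⟩ ≤ S + Phi ⟨n+1, h⟩ := by
      have := Blo_succ_le Phi Slo n h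
      linarith
    have h2 : S + Plo ⟨n+1, h⟩ ≤ Bhi Plo Shi ⟨n+1, h⟩ := by
      have := le_Bhi_succ Plo Shi n h
      linarith
    have key := clip_bounds (S + phat ⟨n+1, h⟩) (Blo Phi Slo ⟨n+1, h⟩) (S + Plo ⟨n+1, h⟩)
      (Bhi Plo Shi ⟨n+1, h⟩) (S + Phi ⟨n+1, h⟩) (hB _) h1 h2
      (by linarith [hP (⟨n+1, h⟩ : Fin T)])
    have hred : greedyS Plo Phi Slo Shi phat (n+2) =
        min (max (S + phat ⟨n+1, h⟩) (max (Blo Phi Slo ⟨n+1, h⟩) (S + Plo ⟨n+1, h⟩)))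
          (min (Bhi Plo Shi ⟨n+1, h⟩) (S + Phi ⟨n+1, h⟩)) := by
      simp only [greedyS, dif_pos h, hS]
    rw [hred]
    exact ⟨key.1, key.2.2.1, by linarith [key.2.1], by linarith [key.2.2.2]⟩

lemma cumsum_greedy {T : ℕ} (S : ℕ → ℝ) (hS0 : S 0 = 0) (p : Fin T → ℝ)
    (hp : ∀ t : Fin T, p t = S (t.1 + 1) - S t.1) (t : Fin T) :
    cumsum p t = S (t.1 + 1) := by
  obtain ⟨n, hn⟩ := t
  induction n with
  | zero =>
    rw [cumsum_zero' p hn, hp ⟨0, hn⟩]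
    simp [hS0]
  | succ n ih =>
    rw [cumsum_succ' p n hn, ih (by omega), hp ⟨n+1, hn⟩]
    ring


theorem envelopes_imply_feasible (T : ℕ) (Plo Phi Slo Shi : Fin T → ℝ)
    (hP : ∀ t, Plo t ≤ Phi t)
    (hC : ∀ t, cumsum Plo t ≤ Slo t ∧ Slo t ≤ Shi t ∧ Shi t ≤ cumsum Phi t)
    (hB : ∀ t, Blo Phi Slo t ≤ Bhi Plo Shi t) :
    (∃ p : Fin T → ℝ, ∀ t, Plo t ≤ p t ∧ p t ≤ Phi t ∧
        Slo t ≤ cumsum p t ∧ cumsum p t ≤ Shi t) ∧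
    (∀ phat : Fin T → ℝ,
      ∀ p : Fin T → ℝ,
        (∀ t : Fin T, p t = greedyS Plo Phi Slo Shi phat (t.1 + 1)
            - greedyS Plo Phi Slo Shi phat t.1) →
        ∀ t, Plo t ≤ p t ∧ p t ≤ Phi t ∧
          Slo t ≤ cumsum p t ∧ cumsum p t ≤ Shi t) := by
  have main : ∀ phat : Fin T → ℝ, ∀ p : Fin T → ℝ,
      (∀ t : Fin T, p t = greedyS Plo Phi Slo Shi phat (t.1 + 1)
          - greedyS Plo Phi Slo Shi phat t.1) →
      ∀ t, Plo t ≤ p t ∧ p t ≤ Phi t ∧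
        Slo t ≤ cumsum p t ∧ cumsum p t ≤ Shi t := by
    intro phat p hp t
    obtain ⟨h1, h2, h3, h4⟩ := greedy_invariant Plo Phi Slo Shi phat hP hC hB t.1 t.2
    have ht : (⟨t.1, t.2⟩ : Fin T) = t := rfl
    rw [ht] at h1 h2 h3 h4
    have hcs : cumsum p t = greedyS Plo Phi Slo Shi phat (t.1 + 1) :=
      cumsum_greedy _ rfl p hp t
    refine ⟨?_, ?_, ?_, ?_⟩
    · rw [hp t]; exact h3
    · rw [hp t]; exact h4
    · rw [hcs]; exact (Slo_le_Blo Phi Slo t).trans h1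
    · rw [hcs]; exact h2.trans (Bhi_le_Shi Plo Shi t)
  exact ⟨⟨fun t => greedyS Plo Phi Slo Shi 0 (t.1 + 1) - greedyS Plo Phi Slo Shi 0 t.1,
      main 0 _ (fun _ => rfl)⟩, main⟩
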